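/- In a graph G with maximum degree Δ, every non-dominating set in a coalition partition can form a coalition with at most Δ+1 other sets of the partition. -/

import Mathlib

/-- `S` dominates the vertex `v`: `v ∈ S` or some vertex of `S` is adjacent to `v`. -/
def SimpleGraph.DominatesVert {V : Type*} (G : SimpleGraph V) (S : Finset V) (v : V) : Prop :=
  v ∈ S ∨ ∃ u ∈ S, G.Adj u v

/-- `S` is a dominating set of `G`. -/
def SimpleGraph.IsDominatingSet {V : Type*} (G : SimpleGraph V) (S : Finset V) : Prop :=
  ∀ v, G.DominatesVert S v

/-- A coalition partition of `G`: a partition of the vertex set into nonempty parts,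
each of which is either a dominating singleton, or a non-dominating set forming a
coalition (dominating union) with another non-dominating part. -/
def SimpleGraph.IsCoalitionPartition {V : Type*} [Fintype V] [DecidableEq V]
    (G : SimpleGraph V) (P : Finset (Finset V)) : Prop :=
  (∀ A ∈ P, A.Nonempty) ∧
  (∀ A ∈ P, ∀ B ∈ P, A ≠ B → Disjoint A B) ∧
  (∀ v : V, ∃ A ∈ P, v ∈ A) ∧
  ∀ A ∈ P,
    (∃ v, A = {v} ∧ G.IsDominatingSet A) ∨
    (¬ G.IsDominatingSet A ∧
      ∃ B ∈ P, B ≠ A ∧ ¬ G.IsDominatingSet B ∧ G.IsDominatingSet (A ∪ B))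

/-- The coalition number of `G`: the maximum number of parts in a coalition partition. -/
noncomputable def SimpleGraph.coalitionNumber {V : Type*} [Fintype V] [DecidableEq V]
    (G : SimpleGraph V) : ℕ :=
  sSup {k | ∃ P : Finset (Finset V), G.IsCoalitionPartition P ∧ P.card = k}

/-- In a graph of maximum degree Δ, a non-dominating part of a coalition partition
forms a coalition with at most Δ + 1 other parts of the partition. -/
theorem card_coalition_partners_le {V : Type*} [Fintype V] [DecidableEq V]
    (G : SimpleGraph V) [DecidableRel G.Adj] (P : Finset (Finset V))
    (hP : G.IsCoalitionPartition P) (A : Finset V) (hA : A ∈ P)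
    (hnd : ¬ G.IsDominatingSet A) :
    {B | B ∈ P ∧ B ≠ A ∧ ¬ G.IsDominatingSet B ∧ G.IsDominatingSet (A ∪ B)}.ncard
      ≤ G.maxDegree + 1 := by
    -- extract a vertex v not dominated by A
  simp only [SimpleGraph.IsDominatingSet, not_forall] at hnd
  obtain ⟨v, hv⟩ := hnd
  set T : Finset V := insert v (G.neighborFinset v) with hT
  -- the set in question as a Finset filter
  have hset : {B | B ∈ P ∧ B ≠ A ∧ ¬ G.IsDominatingSet B ∧ G.IsDominatingSet (A ∪ B)}
      ⊆ ↑(P.filter (fun B => B ≠ A ∧ (B ∩ T).Nonempty)) := by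
    intro B hB
    obtain ⟨hBP, hBA, _, hdom⟩ := hB
    simp only [Finset.coe_filter, Set.mem_setOf_eq]
    refine ⟨hBP, hBA, ?_⟩
    rcases hdom v with h | ⟨u, hu, hadj⟩
    · rcases Finset.mem_union.mp h with h | h
      · exact absurd (Or.inl h) hv
      · exact ⟨v, Finset.mem_inter.mpr ⟨h, Finset.mem_insert_self _ _⟩⟩
    · rcases Finset.mem_union.mp hu with h | h
      · exact absurd (Or.inr ⟨u, h, hadj⟩) hv
      · exact ⟨u, Finset.mem_inter.mpr ⟨h, Finset.mem_insert_of_mem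
          ((G.mem_neighborFinset v u).mpr hadj.symm)⟩⟩
  have h1 : {B | B ∈ P ∧ B ≠ A ∧ ¬ G.IsDominatingSet B ∧ G.IsDominatingSet (A ∪ B)}.ncard
      ≤ (P.filter (fun B => B ≠ A ∧ (B ∩ T).Nonempty)).card := by
    rw [← Set.ncard_coe_finset]
    exact Set.ncard_le_ncard hset (Finset.finite_toSet _)
  refine h1.trans ?_
  -- injection into T via choosing an element of B ∩ T
  have h2 : (P.filter (fun B => B ≠ A ∧ (B ∩ T).Nonempty)).card ≤ T.card := by
    classical
    apply Finset.card_le_card_of_injOn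
      (fun B => if h : (B ∩ T).Nonempty then h.choose else v)
    · intro B hB
      simp only [Finset.mem_coe, Finset.mem_filter] at hB
      simp only [Finset.mem_coe, dif_pos hB.2.2]
      exact (Finset.mem_inter.mp hB.2.2.choose_spec).2
    · intro B₁ hB₁ B₂ hB₂ heq
      simp only [Finset.mem_coe, Finset.mem_filter] at hB₁ hB₂
      simp only [dif_pos hB₁.2.2, dif_pos hB₂.2.2] at heq
      by_contra hne
      have hd := hP.2.1 B₁ hB₁.1 B₂ hB₂.1 hne
      have m1 : hB₁.2.2.choose ∈ B₁ := (Finset.mem_inter.mp hB₁.2.2.choose_spec).1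
      have m2 : hB₂.2.2.choose ∈ B₂ := (Finset.mem_inter.mp hB₂.2.2.choose_spec).1
      rw [heq] at m1
      exact Finset.disjoint_left.mp hd m1 m2
  refine h2.trans ?_
  calc T.card ≤ (G.neighborFinset v).card + 1 := Finset.card_insert_le _ _
    _ = G.degree v + 1 := by rw [G.card_neighborFinset_eq_degree]
    _ ≤ G.maxDegree + 1 := by
        have := G.degree_le_maxDegree v
        omega
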